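/- For any a ∈ ℝⁿ and b ∈ ℝ, the integral of x ↦ Φ(⟨a,x⟩ + b) with respect to the standard Gaussian measure γₙ on ℝⁿ equals Φ(b/√(1+‖a‖²)). -/

import Mathlib

open MeasureTheory Real
open scoped RealInnerProductSpace
open scoped ENNReal NNReal

noncomputable def stdGaussian (n : ℕ) : Measure (EuclideanSpace ℝ (Fin n)) :=
  volume.withDensity fun x =>
    ENNReal.ofReal (Real.exp (-‖x‖ ^ 2 / 2) / (2 * Real.pi) ^ ((n : ℝ) / 2))

noncomputable def Phi (x : ℝ) : ℝ :=
  ∫ y in Set.Iic x, Real.exp (-y ^ 2 / 2) / Real.sqrt (2 * Real.pi)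

noncomputable def gg (y : ℝ) : ℝ := Real.exp (-y ^ 2 / 2) / Real.sqrt (2 * Real.pi)

lemma gg_nonneg (y : ℝ) : 0 ≤ gg y := by
  unfold gg; positivity

lemma continuous_gg : Continuous gg := by
  unfold gg; fun_prop

lemma integrable_gg : Integrable gg := by
  unfold gg
  have : ∀ y : ℝ, Real.exp (-y ^ 2 / 2) / Real.sqrt (2*π) = Real.exp (-(1/2) * y ^ 2) * (Real.sqrt (2*π))⁻¹ := by
    intro y; rw [div_eq_mul_inv]; ring_nf
  simp_rw [this]
  exact (integrable_exp_neg_mul_sq (by norm_num)).mul_const _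

lemma integral_gg : ∫ y, gg y = 1 := by
  unfold gg
  have : ∀ y : ℝ, Real.exp (-y ^ 2 / 2) / Real.sqrt (2*π) = Real.exp (-(1/2) * y ^ 2) * (Real.sqrt (2*π))⁻¹ := by
    intro y; rw [div_eq_mul_inv]; ring_nf
  simp_rw [this]
  rw [integral_mul_const, integral_gaussian]
  rw [show (π / (1/2)) = 2 * π by ring]
  rw [mul_inv_cancel₀ (by positivity : Real.sqrt (2*π) ≠ 0)]

lemma Phi_eq (x : ℝ) : Phi x = ∫ y in Set.Iic x, gg y := rfl

lemma Phi_nonneg (x : ℝ) : 0 ≤ Phi x := by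
  rw [Phi_eq]
  exact setIntegral_nonneg measurableSet_Iic fun y _ => gg_nonneg y

lemma Phi_le_one (x : ℝ) : Phi x ≤ 1 := by
  rw [Phi_eq, ← integral_gg]
  exact setIntegral_le_integral integrable_gg (Filter.Eventually.of_forall gg_nonneg)

lemma monotone_Phi : Monotone Phi := by
  intro x y hxy
  rw [Phi_eq, Phi_eq]
  exact setIntegral_mono_set integrable_gg.integrableOn
    (Filter.Eventually.of_forall gg_nonneg) (HasSubset.Subset.eventuallyLE (Set.Iic_subset_Iic.2 hxy))

lemma measurable_Phi : Measurable Phi := monotone_Phi.measurable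

lemma Phi_shift (β c : ℝ) : ∫ u in Set.Iic β, gg (u + c) = Phi (β + c) := by
  rw [Phi_eq]
  have h1 : MeasurePreserving (fun x : ℝ => x + c) volume volume :=
    measurePreserving_add_right volume c
  have h2 : MeasurableEmbedding (fun x : ℝ => x + c) :=
    (MeasurableEquiv.addRight c).measurableEmbedding
  have := h1.setIntegral_preimage_emb h2 gg (Set.Iic (β + c))
  rw [show (fun x : ℝ => x + c) ⁻¹' Set.Iic (β + c) = Set.Iic β by
    ext x; simp] at this
  exact this

lemma Phi_scale {c : ℝ} (hc : 0 < c) (β : ℝ) :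
    ∫ x in Set.Iic β, gg (x / c) = c * Phi (β / c) := by
  have hc' : (c : ℝ)⁻¹ ≠ 0 := inv_ne_zero hc.ne'
  have hmap : Measure.map (fun x : ℝ => c⁻¹ * x) volume = ENNReal.ofReal c • volume := by
    rw [Real.map_volume_mul_left hc']
    congr 1
    rw [inv_inv, abs_of_pos hc]
  have hemb : MeasurableEmbedding (fun x : ℝ => c⁻¹ * x) :=
    (MeasurableEquiv.mulLeft₀ c⁻¹ hc').measurableEmbedding
  have := hemb.setIntegral_map (μ := volume) gg (Set.Iic (β / c))
  rw [hmap] at this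
  rw [show (fun x : ℝ => c⁻¹ * x) ⁻¹' Set.Iic (β / c) = Set.Iic β by
      ext x
      simp only [Set.mem_preimage, Set.mem_Iic]
      rw [inv_mul_eq_div, div_le_div_iff_of_pos_right hc]] at this
  have hsmul : ∫ y in Set.Iic (β / c), gg y ∂(ENNReal.ofReal c • volume)
      = c * ∫ y in Set.Iic (β / c), gg y := by
    rw [Measure.restrict_smul, integral_smul_measure, ENNReal.toReal_ofReal hc.le, smul_eq_mul]
  rw [hsmul] at this
  rw [← Phi_eq] at this
  rw [this]
  apply setIntegral_congr_fun measurableSet_Iic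
  intro x _
  simp only [inv_mul_eq_div]

lemma inner_int (α u : ℝ) :
    ∫ t, gg t * gg (u + α * t) =
      (Real.sqrt (1 + α ^ 2))⁻¹ * gg (u / Real.sqrt (1 + α ^ 2)) := by
  have hS : (0:ℝ) < 1 + α ^ 2 := by positivity
  set S : ℝ := 1 + α ^ 2 with hSdef
  have hk : (0:ℝ) < S / 2 := by positivity
  have h1 : ∀ t : ℝ, gg t * gg (u + α * t)
      = ((2 * π)⁻¹ * Real.exp (-u ^ 2 / (2 * S))) *
        Real.exp (-(S/2) * (t + α * u / S) ^ 2) := by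
    intro t
    unfold gg
    have harg : -t ^ 2 / 2 + -(u + α * t) ^ 2 / 2
        = -u ^ 2 / (2 * S) + -(S/2) * (t + α * u / S) ^ 2 := by
      rw [hSdef]; field_simp; ring
    rw [div_mul_div_comm, Real.mul_self_sqrt (by positivity), ← Real.exp_add, harg,
      Real.exp_add, div_eq_mul_inv]
    ring
  simp_rw [h1]
  rw [integral_const_mul]
  rw [show (∫ t : ℝ, Real.exp (-(S/2) * (t + α * u / S) ^ 2))
      = ∫ t : ℝ, Real.exp (-(S/2) * t ^ 2) from
    integral_add_right_eq_self (fun t : ℝ => Real.exp (-(S/2) * t ^ 2)) (α * u / S)]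
  rw [integral_gaussian]
  have hsqS : (0:ℝ) < Real.sqrt S := Real.sqrt_pos.2 hS
  have hsq2π : (0:ℝ) < Real.sqrt (2 * π) := Real.sqrt_pos.2 (by positivity)
  have hexp : -(u / Real.sqrt S) ^ 2 / 2 = -u ^ 2 / (2 * S) := by
    rw [div_pow, Real.sq_sqrt hS.le, neg_div, neg_div, div_div, mul_comm S 2]
  have hgg : gg (u / Real.sqrt S) = Real.exp (-u ^ 2 / (2 * S)) / Real.sqrt (2 * π) := by
    unfold gg
    rw [hexp]
  rw [hgg]
  have hdiv : Real.sqrt (π / (S / 2)) = Real.sqrt (2 * π) / Real.sqrt S := by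
    rw [show π / (S / 2) = (2 * π) / S by field_simp, Real.sqrt_div (by positivity)]
  rw [hdiv]
  have hw : Real.sqrt (2 * π) * Real.sqrt (2 * π) = 2 * π :=
    Real.mul_self_sqrt (by positivity)
  set w := Real.sqrt (2 * π) with hwdef
  field_simp
  linear_combination hw

lemma integrable_gg_shift (c : ℝ) : Integrable (fun u : ℝ => gg (u + c)) := by
  have h := (measurePreserving_add_right (volume : Measure ℝ) c).integrable_comp_emb
    (MeasurableEquiv.addRight c).measurableEmbedding (g := gg)
  rw [show (gg ∘ fun x : ℝ => x + c) = fun u : ℝ => gg (u + c) from rfl] at h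
  exact h.2 integrable_gg

lemma oneD (α β : ℝ) :
    ∫ t, gg t * Phi (α * t + β) = Phi (β / Real.sqrt (1 + α ^ 2)) := by
  have hS : (0:ℝ) < 1 + α ^ 2 := by positivity
  have hc : (0:ℝ) < Real.sqrt (1 + α ^ 2) := Real.sqrt_pos.2 hS
  have hPhishift : ∀ t : ℝ, Phi (α * t + β) = ∫ u in Set.Iic β, gg (u + α * t) := by
    intro t
    rw [Phi_shift β (α * t), add_comm]
  have hcont : Continuous (Function.uncurry fun t u : ℝ => gg t * gg (u + α * t)) :=
    (continuous_gg.comp continuous_fst).mul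
      (continuous_gg.comp (continuous_snd.add (continuous_const.mul continuous_fst)))
  have hint : Integrable (Function.uncurry fun t u : ℝ => gg t * gg (u + α * t))
      (volume.prod (volume.restrict (Set.Iic β))) := by
    rw [integrable_prod_iff hcont.aestronglyMeasurable]
    constructor
    · refine Filter.Eventually.of_forall fun t => ?_
      exact (((integrable_gg_shift (α * t)).restrict).const_mul (gg t))
    · have heq : (fun t : ℝ => ∫ u in Set.Iic β, ‖gg t * gg (u + α * t)‖)
          = fun t : ℝ => gg t * Phi (β + α * t) := by
        funext t
        rw [← Phi_shift β (α * t), ← integral_const_mul]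
        refine setIntegral_congr_fun measurableSet_Iic fun u _ => ?_
        rw [Real.norm_eq_abs, abs_of_nonneg (mul_nonneg (gg_nonneg t) (gg_nonneg _))]
      simp only [Function.uncurry_apply_pair]
      rw [heq]
      refine integrable_gg.mono' ?_ ?_
      · exact (continuous_gg.measurable.mul
          (measurable_Phi.comp (measurable_const.add (measurable_const.mul measurable_id)))).aestronglyMeasurable
      · refine Filter.Eventually.of_forall fun t => ?_
        rw [Real.norm_eq_abs, abs_of_nonneg (mul_nonneg (gg_nonneg t) (Phi_nonneg _))]
        calc gg t * Phi (β + α * t) ≤ gg t * 1 :=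
              mul_le_mul_of_nonneg_left (Phi_le_one _) (gg_nonneg t)
          _ = gg t := mul_one _
  calc ∫ t, gg t * Phi (α * t + β)
      = ∫ t, ∫ u in Set.Iic β, gg t * gg (u + α * t) := by
        refine integral_congr_ae (Filter.Eventually.of_forall fun t => ?_)
        show gg t * Phi (α * t + β) = ∫ u in Set.Iic β, gg t * gg (u + α * t)
        rw [hPhishift t, ← integral_const_mul]
    _ = ∫ u in Set.Iic β, ∫ t, gg t * gg (u + α * t) := integral_integral_swap hint
    _ = ∫ u in Set.Iic β, (Real.sqrt (1 + α ^ 2))⁻¹ * gg (u / Real.sqrt (1 + α ^ 2)) := by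
        refine setIntegral_congr_fun measurableSet_Iic fun u _ => ?_
        exact inner_int α u
    _ = (Real.sqrt (1 + α ^ 2))⁻¹ * ∫ u in Set.Iic β, gg (u / Real.sqrt (1 + α ^ 2)) :=
        integral_const_mul _ _
    _ = Phi (β / Real.sqrt (1 + α ^ 2)) := by
        rw [Phi_scale hc, ← mul_assoc, inv_mul_cancel₀ hc.ne', one_mul]

lemma key (n : ℕ) (a : Fin n → ℝ) (b : ℝ) :
    ∫ y : Fin n → ℝ, (∏ i, gg (y i)) * Phi ((∑ i, a i * y i) + b)
      = Phi (b / Real.sqrt (1 + ∑ i, a i ^ 2)) := by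
  induction n generalizing b with
  | zero =>
      simp only [Finset.univ_eq_empty, Finset.prod_empty, Finset.sum_empty, one_mul, zero_add,
        add_zero, volume_pi, integral_const, Measure.pi_empty_univ, measureReal_def, ENNReal.toReal_one, one_smul]
      rw [Real.sqrt_one, div_one]
  | succ n ih =>
      have hS : (0:ℝ) ≤ ∑ i : Fin n, a i.succ ^ 2 :=
        Finset.sum_nonneg fun i _ => sq_nonneg _
      set S : ℝ := ∑ i : Fin n, a i.succ ^ 2 with hSdef
      have h1S : (0:ℝ) < 1 + S := by positivity
      have hsq : (0:ℝ) < Real.sqrt (1 + S) := Real.sqrt_pos.2 h1S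
      have hGint : Integrable (fun z : ℝ × (Fin n → ℝ) => gg z.1 * ∏ i, gg (z.2 i))
          ((volume : Measure ℝ).prod (Measure.pi fun _ => volume)) := by
        have := Integrable.mul_prod integrable_gg
          (Integrable.fin_nat_prod (E := fun _ : Fin n => ℝ) (f := fun _ => gg)
            fun _ => integrable_gg)
        exact this
      have hfint : Integrable (fun z : ℝ × (Fin n → ℝ) =>
          (gg z.1 * ∏ i, gg (z.2 i)) * Phi ((∑ i, a i.succ * z.2 i) + (a 0 * z.1 + b)))
          ((volume : Measure ℝ).prod (Measure.pi fun _ => volume)) := by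
        refine hGint.mono' ?_ ?_
        · have hGcont : Continuous (fun z : ℝ × (Fin n → ℝ) => gg z.1 * ∏ i, gg (z.2 i)) := by
            refine (continuous_gg.comp continuous_fst).mul ?_
            exact continuous_finset_prod _ fun i _ =>
              continuous_gg.comp ((continuous_apply i).comp continuous_snd)
          have hm : Measurable (fun z : ℝ × (Fin n → ℝ) =>
              Phi ((∑ i, a i.succ * z.2 i) + (a 0 * z.1 + b))) := by
            refine measurable_Phi.comp ?_
            refine Measurable.add ?_ ?_
            · exact Finset.measurable_sum _ fun i _ =>
                (measurable_const.mul ((measurable_pi_apply i).comp measurable_snd))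
            · exact (measurable_const.mul measurable_fst).add measurable_const
          exact (hGcont.measurable.mul hm).aestronglyMeasurable
        · refine Filter.Eventually.of_forall fun z => ?_
          have hGnn : 0 ≤ gg z.1 * ∏ i, gg (z.2 i) :=
            mul_nonneg (gg_nonneg _) (Finset.prod_nonneg fun i _ => gg_nonneg _)
          rw [Real.norm_eq_abs, abs_of_nonneg (mul_nonneg hGnn (Phi_nonneg _))]
          calc _ ≤ (gg z.1 * ∏ i, gg (z.2 i)) * 1 :=
                mul_le_mul_of_nonneg_left (Phi_le_one _) hGnn
            _ = _ := mul_one _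
      calc ∫ y : Fin (n+1) → ℝ, (∏ i, gg (y i)) * Phi ((∑ i, a i * y i) + b)
          = ∫ z : ℝ × (Fin n → ℝ),
              (gg z.1 * ∏ i, gg (z.2 i)) * Phi ((∑ i, a i.succ * z.2 i) + (a 0 * z.1 + b))
              ∂((volume : Measure ℝ).prod (Measure.pi fun _ => volume)) := by
            rw [volume_pi, ← ((measurePreserving_piFinSuccAbove
              (fun _ : Fin (n+1) => (volume : Measure ℝ)) 0).symm).integral_comp']
            refine integral_congr_ae (Filter.Eventually.of_forall fun z => ?_)
            simp only [MeasurableEquiv.piFinSuccAbove_symm_apply, Fin.insertNthEquiv,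
              Fin.insertNth_zero, Equiv.coe_fn_mk, Fin.prod_univ_succ, Fin.sum_univ_succ,
              Fin.zero_succAbove, cast_eq, Fin.cons_zero, Fin.cons_succ, Function.comp_apply]
            congr 1
            ring
        _ = ∫ x : ℝ, ∫ y : Fin n → ℝ,
              (gg x * ∏ i, gg (y i)) * Phi ((∑ i, a i.succ * y i) + (a 0 * x + b))
              ∂(Measure.pi fun _ => volume) ∂volume := integral_prod _ hfint
        _ = ∫ x : ℝ, gg x * Phi ((a 0 * x + b) / Real.sqrt (1 + S)) := by
            refine integral_congr_ae (Filter.Eventually.of_forall fun x => ?_)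
            dsimp only
            rw [← ih (fun i => a i.succ) (a 0 * x + b), ← volume_pi, ← integral_const_mul]
            refine integral_congr_ae (Filter.Eventually.of_forall fun y => ?_)
            ring
        _ = ∫ x : ℝ, gg x * Phi ((a 0 / Real.sqrt (1 + S)) * x + b / Real.sqrt (1 + S)) := by
            refine integral_congr_ae (Filter.Eventually.of_forall fun x => ?_)
            dsimp only
            congr 1
            rw [div_mul_eq_mul_div, ← add_div]
        _ = Phi ((b / Real.sqrt (1 + S)) / Real.sqrt (1 + (a 0 / Real.sqrt (1 + S)) ^ 2)) :=
            oneD _ _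
        _ = Phi (b / Real.sqrt (1 + ∑ i : Fin (n+1), a i ^ 2)) := by
            congr 1
            rw [div_div, ← Real.sqrt_mul h1S.le, Fin.sum_univ_succ]
            congr 2
            rw [div_pow, Real.sq_sqrt h1S.le]
            field_simp
            ring

theorem stmt_0 (n : ℕ) (a : EuclideanSpace ℝ (Fin n)) (b : ℝ) :
    ∫ x, Phi (⟪a, x⟫ + b) ∂(stdGaussian n) = Phi (b / Real.sqrt (1 + ‖a‖ ^ 2)) := by
  set ρ : EuclideanSpace ℝ (Fin n) → ℝ :=
    fun x => Real.exp (-‖x‖ ^ 2 / 2) / (2 * Real.pi) ^ ((n : ℝ) / 2) with hρ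
  have hρcont : Continuous ρ := by
    apply Continuous.div_const
    exact Real.continuous_exp.comp ((continuous_norm.pow 2).neg.div_const 2)
  have hρnn : ∀ x, 0 ≤ ρ x := by
    intro x
    have : (0:ℝ) < 2 * π := by positivity
    positivity
  have hmeas : Measurable fun x => (ρ x).toNNReal :=
    hρcont.measurable.real_toNNReal
  have hA : ∫ x, Phi (⟪a, x⟫ + b) ∂(stdGaussian n)
      = ∫ x, ρ x * Phi (⟪a, x⟫ + b) ∂(volume : Measure (EuclideanSpace ℝ (Fin n))) := by
    rw [stdGaussian]
    rw [show (fun x : EuclideanSpace ℝ (Fin n) =>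
        ENNReal.ofReal (Real.exp (-‖x‖ ^ 2 / 2) / (2 * Real.pi) ^ ((n : ℝ) / 2)))
      = fun x => ((ρ x).toNNReal : ℝ≥0∞) from rfl]
    rw [integral_withDensity_eq_integral_smul hmeas]
    refine integral_congr_ae (Filter.Eventually.of_forall fun x => ?_)
    dsimp only
    rw [NNReal.smul_def, Real.coe_toNNReal _ (hρnn x), smul_eq_mul]
  have hvol : MeasurePreserving (MeasurableEquiv.toLp 2 (Fin n → ℝ))
      (volume : Measure (Fin n → ℝ)) (volume : Measure (EuclideanSpace ℝ (Fin n))) :=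
    (EuclideanSpace.volume_preserving_symm_measurableEquiv_toLp (Fin n)).symm
  rw [hA, ← hvol.integral_comp']
  have hpt : ∀ y : Fin n → ℝ,
      ρ ((MeasurableEquiv.toLp 2 (Fin n → ℝ)) y)
        * Phi (⟪a, (MeasurableEquiv.toLp 2 (Fin n → ℝ)) y⟫ + b)
      = (∏ i, gg (y i)) * Phi ((∑ i, a i * y i) + b) := by
    intro y
    have happ : ∀ i, ((MeasurableEquiv.toLp 2 (Fin n → ℝ)) y) i = y i := by
      intro i
      rfl
    have hnorm : ‖(MeasurableEquiv.toLp 2 (Fin n → ℝ)) y‖ ^ 2 = ∑ i, y i ^ 2 := by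
      rw [EuclideanSpace.norm_eq, Real.sq_sqrt (Finset.sum_nonneg fun i _ => sq_nonneg _)]
      exact Finset.sum_congr rfl fun i _ => by rw [happ, Real.norm_eq_abs, sq_abs]
    have hinner : ⟪a, (MeasurableEquiv.toLp 2 (Fin n → ℝ)) y⟫ = ∑ i, a i * y i := by
      rw [PiLp.inner_apply]
      refine Finset.sum_congr rfl fun i _ => ?_
      rw [happ, RCLike.inner_apply, conj_trivial, mul_comm]
    have hprod : ∏ i, gg (y i)
        = Real.exp (-(∑ i, y i ^ 2) / 2) / (2 * π) ^ ((n : ℝ) / 2) := by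
      unfold gg
      rw [Finset.prod_div_distrib, ← Real.exp_sum, Finset.prod_const, Finset.card_univ,
        Fintype.card_fin]
      congr 1
      · congr 1
        rw [← Finset.sum_div, ← Finset.sum_neg_distrib]
      · rw [Real.sqrt_eq_rpow, ← Real.rpow_natCast ((2*π) ^ ((1:ℝ)/2)) n,
          ← Real.rpow_mul (by positivity)]
        congr 1
        ring
    rw [hinner, hρ]
    dsimp only
    rw [hnorm, hprod]
  calc ∫ y : Fin n → ℝ, ρ ((MeasurableEquiv.toLp 2 (Fin n → ℝ)) y)
        * Phi (⟪a, (MeasurableEquiv.toLp 2 (Fin n → ℝ)) y⟫ + b)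
      = ∫ y : Fin n → ℝ, (∏ i, gg (y i)) * Phi ((∑ i, a i * y i) + b) :=
        integral_congr_ae (Filter.Eventually.of_forall fun y => hpt y)
    _ = Phi (b / Real.sqrt (1 + ∑ i, a i ^ 2)) := key n (fun i => a i) b
    _ = Phi (b / Real.sqrt (1 + ‖a‖ ^ 2)) := by
        rw [EuclideanSpace.norm_eq, Real.sq_sqrt (Finset.sum_nonneg fun i _ => sq_nonneg _)]
        simp [Real.norm_eq_abs, sq_abs]
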